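/- Let (v, a) be a product two-action game with m players. The sets EC(π), as π ranges over all permutations of {1,…,m}, are pairwise disjoint; each EC(π) has exactly 2^{|F(π)|} elements; and the total number of equilibrium candidates equals V(m) = Σ_{l=0}^m binom(m,l)·2^l·!(m−l). -/

import Mathlib

open Finset
open scoped Classical

/-- `λ^i(γ) = (−1)^{v_i} · ∏_{j ≠ i} (γ_j − a^i_j)` for a product two-action game. -/
def lamP {m : ℕ} (v : Fin m → ℕ) (a : Fin m → Fin m → ℝ) (i : Fin m) (γ : Fin m → ℝ) : ℝ :=
  (-1 : ℝ) ^ (v i) * ∏ j ∈ Finset.univ.erase i, (γ j - a i j)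

/-- `γ ∈ [0,1]^m`. -/
def InCube {m : ℕ} (γ : Fin m → ℝ) : Prop := ∀ i, 0 ≤ γ i ∧ γ i ≤ 1

/-- Equilibrium candidate: `λ^i(γ) = 0` for every `i` with `0 < γ_i < 1`. -/
def IsEqCand {m : ℕ} (v : Fin m → ℕ) (a : Fin m → Fin m → ℝ) (γ : Fin m → ℝ) : Prop :=
  InCube γ ∧ ∀ i, 0 < γ i → γ i < 1 → lamP v a i γ = 0

/-- Nash equilibrium of the product two-action game. -/
def IsNashP {m : ℕ} (v : Fin m → ℕ) (a : Fin m → Fin m → ℝ) (γ : Fin m → ℝ) : Prop :=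
  IsEqCand v a γ ∧ (∀ i, γ i = 0 → lamP v a i γ ≤ 0) ∧ (∀ i, γ i = 1 → 0 ≤ lamP v a i γ)

/-- The coefficient conditions of a product two-action game:
`a^i_j ∈ (0,1)` and `a^{i₁}_j ≠ a^{i₂}_j` for distinct `i₁, i₂ ≠ j`. -/
def GoodCoef {m : ℕ} (a : Fin m → Fin m → ℝ) : Prop :=
  (∀ i j : Fin m, i ≠ j → 0 < a i j ∧ a i j < 1) ∧
  (∀ j i₁ i₂ : Fin m, i₁ ≠ j → i₂ ≠ j → i₁ ≠ i₂ → a i₁ j ≠ a i₂ j)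

/-- `EC(π)`. -/
def ECset {m : ℕ} (a : Fin m → Fin m → ℝ) (π : Equiv.Perm (Fin m)) : Set (Fin m → ℝ) :=
  {γ | InCube γ ∧ (∀ i, π i = i → (γ i = 0 ∨ γ i = 1)) ∧ (∀ j, π j ≠ j → γ j = a (π j) j)}

/-- `|F(π)|`, the number of fixed points of `π`. -/
def fixedCard {m : ℕ} (π : Equiv.Perm (Fin m)) : ℕ :=
  (Finset.univ.filter fun i => π i = i).card

/-- `V(m) = Σ_{l=0}^m binom(m,l)·2^l·!(m−l)`. -/
def Vnum (m : ℕ) : ℕ :=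
  ∑ l ∈ Finset.range (m + 1), Nat.choose m l * 2 ^ l * numDerangements (m - l)

/-- `σj` is the `j`-th associated permutation: it fixes `j` and sorts the
`a^i_j` (`i ≠ j`) decreasingly. -/
def IsAssoc {m : ℕ} (a : Fin m → Fin m → ℝ) (j : Fin m) (σj : Equiv.Perm (Fin m)) : Prop :=
  σj j = j ∧ ∀ i₁ i₂ : Fin m, i₁ ≠ j → i₂ ≠ j → i₁ ≠ i₂ → (σj i₁ < σj i₂ ↔ a i₂ j < a i₁ j)

/-- The increment `Inc(γ,i)` of an equilibrium candidate `γ ∈ EC(π)` at `i ∈ F(π)`. -/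
noncomputable def IncMap {m : ℕ} (v : Fin m → ℕ) (σ : Fin m → Equiv.Perm (Fin m))
    (π : Equiv.Perm (Fin m)) (γ : Fin m → ℝ) (i : Fin m) : ℕ :=
  (1 + (if γ i = 1 then 1 else 0) + v i
    + (Finset.univ.filter fun k => π k = k ∧ k ≠ i ∧ γ k = 0).card
    + ∑ j ∈ Finset.univ.filter (fun j => π j ≠ j),
        (if (σ j) i ≤ (σ j) (π j) then 1 else 0)) % 2

/-- `g(π)`: the equilibrium candidate in `EC(π)` with `γ_i = 1` for all `i ∈ F(π)`. -/
noncomputable def gP {m : ℕ} (a : Fin m → Fin m → ℝ) (π : Equiv.Perm (Fin m)) : Fin m → ℝ :=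
  fun j => if π j = j then 1 else a (π j) j

/-- A product two-action game is maximal if for every permutation `π` with
`F(π) ≠ ∅` exactly `2^{|F(π)|−1}` elements of `EC(π)` are Nash equilibria. -/
def IsMaximal {m : ℕ} (v : Fin m → ℕ) (a : Fin m → Fin m → ℝ) : Prop :=
  ∀ π : Equiv.Perm (Fin m), (∃ i, π i = i) →
    {γ ∈ ECset a π | IsNashP v a γ}.ncard = 2 ^ (fixedCard π - 1)

/-- `χ(a,b) = 1` iff `a ≥ b` (on naturals). -/
def chiN (x y : ℕ) : ℕ := if y ≤ x then 1 else 0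

/-- The permutation `δ^i` of `{1,…,m}`. -/
def deltaFun (m i j : ℕ) : ℕ :=
  if j = i then i
  else if j < i then m - i + j + chiN (m - i + j) i
  else j - i + chiN (j - i) i

section AuxStmt1


variable {m : ℕ}

/-- Parametrization of `EC(π)` by boolean choices on the fixed points. -/
noncomputable def PhiEC (a : Fin m → Fin m → ℝ) (π : Equiv.Perm (Fin m)) :
    ({i : Fin m // π i = i} → Bool) → (Fin m → ℝ) :=
  fun b j => if h : π j = j then (if b ⟨j, h⟩ then 1 else 0) else a (π j) j

lemma GoodCoef.ne_of_apply_ne {a : Fin m → Fin m → ℝ} (ha : GoodCoef a)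
    {π : Equiv.Perm (Fin m)} {j : Fin m} (h : π j ≠ j) :
    0 < a (π j) j ∧ a (π j) j < 1 := ha.1 _ _ h

lemma PhiEC_mem {a : Fin m → Fin m → ℝ} (ha : GoodCoef a) (π : Equiv.Perm (Fin m))
    (b : {i : Fin m // π i = i} → Bool) : PhiEC a π b ∈ ECset a π := by
  refine ⟨fun j => ?_, fun i hi => ?_, fun j hj => ?_⟩
  · by_cases h : π j = j
    · simp only [PhiEC, dif_pos h]
      split <;> norm_num
    · have := ha.1 (π j) j h
      simp only [PhiEC, dif_neg h]
      constructor <;> linarith [this.1, this.2]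
  · simp only [PhiEC, dif_pos hi]
    split
    · exact Or.inr rfl
    · exact Or.inl rfl
  · simp only [PhiEC, dif_neg hj]

lemma PhiEC_inj {a : Fin m → Fin m → ℝ} (π : Equiv.Perm (Fin m)) :
    Function.Injective (PhiEC a π) := by
  intro b₁ b₂ hb
  funext i
  have := congrFun hb i
  simp only [PhiEC, dif_pos i.2] at this
  cases h1 : b₁ i <;> cases h2 : b₂ i <;> simp [h1, h2] at this ⊢

lemma mem_ECset_exists {a : Fin m → Fin m → ℝ} (ha : GoodCoef a) (π : Equiv.Perm (Fin m))
    {γ : Fin m → ℝ} (hγ : γ ∈ ECset a π) : ∃ b, PhiEC a π b = γ := by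
  refine ⟨fun i => decide (γ i = 1), ?_⟩
  funext j
  by_cases h : π j = j
  · rcases hγ.2.1 j h with h0 | h1
    · have : ¬ (γ j = 1) := by rw [h0]; norm_num
      simp [PhiEC, dif_pos h, this, h0]
    · simp [PhiEC, dif_pos h, h1]
  · simp [PhiEC, dif_neg h, (hγ.2.2 j h).symm]

/-- The finset version of `EC(π)`. -/
noncomputable def ECfin (a : Fin m → Fin m → ℝ) (π : Equiv.Perm (Fin m)) :
    Finset (Fin m → ℝ) :=
  Finset.image (PhiEC a π) Finset.univ

lemma ECset_eq_coe {a : Fin m → Fin m → ℝ} (ha : GoodCoef a) (π : Equiv.Perm (Fin m)) :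
    ECset a π = ↑(ECfin a π) := by
  ext γ
  simp only [ECfin, Finset.coe_image, Finset.coe_univ, Set.image_univ, Set.mem_range]
  constructor
  · exact fun h => mem_ECset_exists ha π h
  · rintro ⟨b, rfl⟩; exact PhiEC_mem ha π b

lemma ECfin_card {a : Fin m → Fin m → ℝ} (π : Equiv.Perm (Fin m)) :
    (ECfin a π).card = 2 ^ fixedCard π := by
  rw [ECfin, Finset.card_image_of_injective _ (PhiEC_inj π), Finset.card_univ,
    Fintype.card_fun, Fintype.card_bool, Fintype.card_subtype]
  rfl

lemma ECset_disjoint {a : Fin m → Fin m → ℝ} (ha : GoodCoef a)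
    {π₁ π₂ : Equiv.Perm (Fin m)} (h : π₁ ≠ π₂) :
    Disjoint (ECset a π₁) (ECset a π₂) := by
  rw [Set.disjoint_left]
  rintro γ ⟨hc1, hf1, hn1⟩ ⟨hc2, hf2, hn2⟩
  have : ∃ j, π₁ j ≠ π₂ j := by
    by_contra hcon
    push_neg at hcon
    exact h (Equiv.ext hcon)
  obtain ⟨j, hj⟩ := this
  by_cases h1 : π₁ j = j
  · have h2 : π₂ j ≠ j := fun h2 => hj (h1.trans h2.symm)
    have := ha.1 (π₂ j) j h2
    have hγ := hn2 j h2
    rcases hf1 j h1 with h0 | h01 <;> rw [hγ] at * <;> linarith [this.1, this.2]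
  · by_cases h2 : π₂ j = j
    · have := ha.1 (π₁ j) j h1
      have hγ := hn1 j h1
      rcases hf2 j h2 with h0 | h01 <;> rw [hγ] at * <;> linarith [this.1, this.2]
    · exact ha.2 j (π₁ j) (π₂ j) h1 h2 hj ((hn1 j h1).symm.trans (hn2 j h2))

lemma mem_ECset_isEqCand {v : Fin m → ℕ} {a : Fin m → Fin m → ℝ} (ha : GoodCoef a)
    {π : Equiv.Perm (Fin m)} {γ : Fin m → ℝ} (hγ : γ ∈ ECset a π) : IsEqCand v a γ := by
  obtain ⟨hc, hf, hn⟩ := hγ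
  refine ⟨hc, fun i h0 h1 => ?_⟩
  have hπi : π i ≠ i := by
    intro h
    rcases hf i h with h' | h'
    · rw [h'] at h0; exact lt_irrefl _ h0
    · rw [h'] at h1; exact lt_irrefl _ h1
  set j := π.symm i with hjdef
  have hji : j ≠ i := by
    intro h
    apply hπi
    conv_lhs => rw [← h]
    rw [hjdef, Equiv.apply_symm_apply]
  have hπj : π j ≠ j := by
    rw [hjdef, Equiv.apply_symm_apply]
    exact fun h => hji (hjdef ▸ h ▸ rfl)
  have hγj : γ j = a i j := by
    have := hn j hπj
    rwa [hjdef, Equiv.apply_symm_apply] at this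
  rw [lamP, Finset.prod_eq_zero (i := j) (by simp [hji]) (by rw [hγj]; ring), mul_zero]

lemma isEqCand_mem_ECset {v : Fin m → ℕ} {a : Fin m → Fin m → ℝ} (ha : GoodCoef a)
    {γ : Fin m → ℝ} (hγ : IsEqCand v a γ) : ∃ π, γ ∈ ECset a π := by
  classical
  set P : Fin m → Prop := fun j => 0 < γ j ∧ γ j < 1 with hP
  have hex : ∀ i : {i : Fin m // P i}, ∃ j : {j : Fin m // P j},
      (j : Fin m) ≠ (i : Fin m) ∧ γ (j : Fin m) = a (i : Fin m) (j : Fin m) := by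
    rintro ⟨i, hi⟩
    have hl := hγ.2 i hi.1 hi.2
    rw [lamP, mul_eq_zero] at hl
    rcases hl with hl | hl
    · exact absurd hl (pow_ne_zero _ (by norm_num))
    · rw [Finset.prod_eq_zero_iff] at hl
      obtain ⟨j, hjmem, hj0⟩ := hl
      have hji : j ≠ i := (Finset.mem_erase.mp hjmem).1
      have hγj : γ j = a i j := by linarith [sub_eq_zero.mp hj0]
      have hij : i ≠ j := fun h => hji h.symm
      have haij := ha.1 i j hij
      refine ⟨⟨j, ?_⟩, hji, hγj⟩
      show 0 < γ j ∧ γ j < 1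
      rw [hγj]
      exact ⟨haij.1, haij.2⟩
  choose w hw1 hw2 using hex
  have hwinj : Function.Injective w := by
    rintro i₁ i₂ hww
    by_contra hne
    have hne' : (i₁ : Fin m) ≠ (i₂ : Fin m) := fun h => hne (Subtype.ext h)
    refine ha.2 (w i₁ : Fin m) (i₁ : Fin m) (i₂ : Fin m)
      (fun h => (hw1 i₁) h.symm) ?_ hne' ?_
    · rw [hww]; exact fun h => (hw1 i₂) h.symm
    · rw [← hw2 i₁, hww, hw2 i₂]
  have hwbij : Function.Bijective w := Finite.injective_iff_bijective.mp hwinj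
  set τ : Equiv.Perm {j : Fin m // P j} := Equiv.ofBijective w hwbij with hτ
  refine ⟨Equiv.Perm.ofSubtype τ.symm, hγ.1, fun i hi => ?_, fun j hj => ?_⟩
  · -- fixed points have γ ∈ {0,1}
    have hnPi : ¬ P i := by
      intro hPi
      rw [Equiv.Perm.ofSubtype_apply_of_mem τ.symm hPi] at hi
      have : τ.symm ⟨i, hPi⟩ = ⟨i, hPi⟩ := Subtype.ext hi
      have h2 : τ ⟨i, hPi⟩ = ⟨i, hPi⟩ := by
        conv_lhs => rw [← this]
        exact τ.apply_symm_apply _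
      have : (w ⟨i, hPi⟩ : Fin m) = i := by
        have : w ⟨i, hPi⟩ = ⟨i, hPi⟩ := h2
        rw [this]
      exact hw1 ⟨i, hPi⟩ this
    rcases (hγ.1 i).1.lt_or_eq with h0 | h0
    · refine Or.inr ?_
      rcases lt_or_eq_of_le (hγ.1 i).2 with h1 | h1
      · exact absurd (show P i from ⟨h0, h1⟩) hnPi
      · exact h1
    · exact Or.inl h0.symm
  · have hPj : P j := by
      by_contra hnPj
      exact hj (Equiv.Perm.ofSubtype_apply_of_not_mem τ.symm hnPj)
    rw [Equiv.Perm.ofSubtype_apply_of_mem τ.symm hPj]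
    have hkey : w (τ.symm ⟨j, hPj⟩) = ⟨j, hPj⟩ := τ.apply_symm_apply _
    have := hw2 (τ.symm ⟨j, hPj⟩)
    rw [hkey] at this
    exact this

/-- Permutations with fixed-point set exactly `S` are equinumerous with derangements
of the complement. -/
noncomputable def fixedSetEquivDerangements (S : Finset (Fin m)) :
    {π : Equiv.Perm (Fin m) // ∀ i, π i = i ↔ i ∈ S} ≃
      derangements {x : Fin m // x ∉ S} where
  toFun := fun ⟨π, hπ⟩ =>
    ⟨π.subtypePerm (p := fun x => x ∉ S) (fun x => by
      constructor
      · intro hπx hx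
        have h2 : π x = x := (hπ x).mpr hx
        rw [h2] at hπx
        exact hπx hx
      · intro hx hπx
        have h1 : π (π x) = π x := (hπ (π x)).mpr hπx
        have h2 : π x = x := π.injective h1
        rw [h2] at hπx
        exact hx hπx),
      fun x => by
        intro h
        have : π (x : Fin m) = (x : Fin m) := congrArg Subtype.val h
        exact x.2 ((hπ _).mp this)⟩
  invFun := fun ⟨σ, hσ⟩ =>
    ⟨Equiv.Perm.ofSubtype σ, fun i => by
      by_cases hi : i ∈ S
      · simp [Equiv.Perm.ofSubtype_apply_of_not_mem σ (p := fun x => x ∉ S) (not_not_intro hi), hi]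
      · simp only [hi, iff_false]
        rw [Equiv.Perm.ofSubtype_apply_of_mem σ (p := fun x => x ∉ S) hi]
        intro h
        exact hσ ⟨i, hi⟩ (Subtype.ext h)⟩
  left_inv := fun ⟨π, hπ⟩ => by
    apply Subtype.ext
    exact Equiv.Perm.ofSubtype_subtypePerm _ (fun x hx hxS => hx ((hπ x).mpr hxS))
  right_inv := fun ⟨σ, hσ⟩ => by
    apply Subtype.ext
    apply Equiv.ext
    intro x
    apply Subtype.ext
    simp [Equiv.Perm.subtypePerm_apply]

lemma card_fiber_eq (S : Finset (Fin m)) :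
    (Finset.univ.filter fun π : Equiv.Perm (Fin m) =>
        (Finset.univ.filter fun i => π i = i) = S).card
      = numDerangements (m - S.card) := by
  have h1 : (Finset.univ.filter fun π : Equiv.Perm (Fin m) =>
      (Finset.univ.filter fun i => π i = i) = S).card
      = Fintype.card {π : Equiv.Perm (Fin m) // ∀ i, π i = i ↔ i ∈ S} := by
    rw [Fintype.card_subtype]
    congr 1
    apply Finset.filter_congr
    intro π _
    constructor
    · intro h i
      rw [← h]
      simp
    · intro h
      ext i
      simp [h i]
  rw [h1, Fintype.card_congr (fixedSetEquivDerangements S),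
    card_derangements_eq_numDerangements]
  congr 1
  rw [Fintype.card_subtype_compl, Fintype.card_fin]
  simp

lemma sum_two_pow_fixedCard :
    ∑ π : Equiv.Perm (Fin m), 2 ^ fixedCard π = Vnum m := by
  classical
  have hmap : ∀ π : Equiv.Perm (Fin m), π ∈ Finset.univ →
      (Finset.univ.filter fun i => π i = i) ∈ (Finset.univ : Finset (Fin m)).powerset := by
    intro π _
    simp
  rw [← Finset.sum_fiberwise_of_maps_to hmap (fun π => 2 ^ fixedCard π)]
  have hfix : ∀ S ∈ (Finset.univ : Finset (Fin m)).powerset,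
      (∑ π ∈ Finset.univ.filter fun π : Equiv.Perm (Fin m) =>
          (Finset.univ.filter fun i => π i = i) = S, 2 ^ fixedCard π)
        = numDerangements (m - S.card) * 2 ^ S.card := by
    intro S _
    have hcardfix : ∀ π ∈ Finset.univ.filter (fun π : Equiv.Perm (Fin m) =>
        (Finset.univ.filter fun i => π i = i) = S), (2:ℕ) ^ fixedCard π = 2 ^ S.card := by
      intro π hπ
      rw [Finset.mem_filter] at hπ
      rw [fixedCard, hπ.2]
    rw [Finset.sum_congr rfl hcardfix, Finset.sum_const, card_fiber_eq, smul_eq_mul]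
  rw [Finset.sum_congr rfl hfix]
  have := Finset.sum_powerset_apply_card
    (fun l => numDerangements (m - l) * 2 ^ l) (x := (Finset.univ : Finset (Fin m)))
  rw [this, Vnum]
  rw [Finset.card_univ, Fintype.card_fin]
  apply Finset.sum_congr rfl
  intro l _
  rw [smul_eq_mul]
  ring

end AuxStmt1

/-- The sets `EC(π)` are pairwise disjoint, `|EC(π)| = 2^{|F(π)|}`, and
the total number of equilibrium candidates is `V(m) = Σ_{l=0}^m binom(m,l)·2^l·!(m−l)`. -/
theorem stmt1 {m : ℕ} (hm : 1 ≤ m) (v : Fin m → ℕ) (hv : ∀ i, v i ≤ 1)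
    (a : Fin m → Fin m → ℝ) (ha : GoodCoef a) :
    (∀ π₁ π₂ : Equiv.Perm (Fin m), π₁ ≠ π₂ → Disjoint (ECset a π₁) (ECset a π₂)) ∧
    (∀ π : Equiv.Perm (Fin m), (ECset a π).ncard = 2 ^ fixedCard π) ∧
    {γ : Fin m → ℝ | IsEqCand v a γ}.ncard = Vnum m := by
 
  refine ⟨fun π₁ π₂ h => ECset_disjoint ha h, fun π => ?_, ?_⟩
  · rw [ECset_eq_coe ha π, Set.ncard_coe_finset, ECfin_card]
  · have hset : {γ : Fin m → ℝ | IsEqCand v a γ}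
        = ↑(Finset.univ.biUnion (ECfin a)) := by
      ext γ
      simp only [Set.mem_setOf_eq, Finset.coe_biUnion, Finset.coe_univ, Set.mem_iUnion,
        Set.mem_univ, true_and]
      constructor
      · intro h
        obtain ⟨π, hπ⟩ := isEqCand_mem_ECset ha h
        rw [ECset_eq_coe ha, Finset.mem_coe] at hπ
        exact ⟨π, trivial, hπ⟩
      · rintro ⟨π, -, hπ⟩
        rw [← ECset_eq_coe ha] at hπ
        exact mem_ECset_isEqCand ha hπ
    rw [hset, Set.ncard_coe_finset, Finset.card_biUnion, ← sum_two_pow_fixedCard]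
    · exact Finset.sum_congr rfl fun π _ => ECfin_card π
    · intro π₁ _ π₂ _ hne
      have := ECset_disjoint ha hne (π₁ := π₁) (π₂ := π₂)
      rw [ECset_eq_coe ha, ECset_eq_coe ha, Finset.disjoint_coe] at this
      exact this
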